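/- arXiv:1902.08363 — 3 statements merged into one kernel-verified Lean document; each statement's English description precedes it below -/
import Mathlib

section
/- Let T > 0, let N be a positive integer with τ = T/N ≤ 1, and let Q be a symmetric positive definite M₁M₂×M₁M₂ real matrix such that the symmetric part of Q·A, namely (Q·A + (Q·A)ᵀ)/2, is negative semidefinite. Suppose vectors u^0 = φ, u^1, …, u^N ∈ ℝ^{M₁M₂} and f^{1/2}, …, f^{N−1/2} ∈ ℝ^{M₁M₂} satisfy, for n = 1,…,N, (u^n − u^{n−1})/τ = A·(u^{n−1} + u^n) + f^{n−1/2}. Then for every n = 1,…,N: ‖u^n‖²_Q ≤ exp(2T)·‖φ‖²_Q + (exp(2T) − 1)·max_{1≤k≤n} ‖f^{k−1/2}‖²_Q, where ‖v‖²_Q = h₁·h₂·vᵀQv. -/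
open Matrix Kronecker

/-- The Grünwald–Letnikov coefficients `g_k^{(γ)}`. -/
noncomputable def gcoef (γ : ℝ) : ℕ → ℝ
  | 0 => 1
  | (k+1) => (1 - (γ + 1) / (k + 1 : ℕ)) * gcoef γ k

/-- The WSGD coefficients `w_k^{(γ)}`. -/
noncomputable def wcoef (γ : ℝ) : ℕ → ℝ
  | 0 => γ / 2 * gcoef γ 0
  | (k+1) => γ / 2 * gcoef γ (k+1) + (2 - γ) / 2 * gcoef γ k

/-- The `m × m` lower-Hessenberg Toeplitz matrix `G_γ`. -/
noncomputable def Gmat (γ : ℝ) (m : ℕ) : Matrix (Fin m) (Fin m) ℝ :=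
  Matrix.of fun i j => if (j : ℕ) ≤ (i : ℕ) + 1 then wcoef γ ((i : ℕ) + 1 - (j : ℕ)) else 0

private lemma rho_le_exp_aux {t : ℝ} (h0 : 0 < t) (h1 : t ≤ 1) :
    (2 + t) / (2 - t) ≤ Real.exp (2 * t) := by
  have h2t : (0:ℝ) < 2 - t := by linarith
  rw [div_le_iff₀ h2t]
  have he : 1 + t ≤ Real.exp t := by have := Real.add_one_le_exp t; linarith
  have hsq : (1 + t) * (1 + t) ≤ Real.exp t * Real.exp t := by nlinarith [Real.exp_pos t]
  have hexp2 : Real.exp (2 * t) = Real.exp t * Real.exp t := by rw [← Real.exp_add]; ring_nf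
  rw [hexp2]
  have hA := mul_le_mul_of_nonneg_right hsq h2t.le
  have hB : 0 ≤ t * (2 - t ^ 2) := mul_nonneg h0.le (by nlinarith)
  nlinarith [hA, hB]

/-- Two-dimensional stability (Theorem 3.1): if `Q` is symmetric positive definite with
`(QA + (QA)ᵀ)/2` negative semidefinite, then the Crank–Nicolson/WSGD scheme for the 2D
one-side space fractional diffusion equation satisfies
`‖uⁿ‖²_Q ≤ e^{2T}‖φ‖²_Q + (e^{2T} − 1) max_{1≤k≤n}‖fᵏ⁻¹ᐟ²‖²_Q`
with `‖v‖²_Q = h₁ h₂ vᵀQv` and `f k` standing for `f^{k−1/2}`. -/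
theorem CN_scheme_2D_stability (α β T : ℝ)
    (hα : α ∈ Set.Ioo (1 : ℝ) 2) (hβ : β ∈ Set.Ioo (1 : ℝ) 2) (hT : 0 < T)
    (M₁ M₂ N : ℕ) (hM₁ : 0 < M₁) (hM₂ : 0 < M₂) (hN : 0 < N) (hτ : T / N ≤ 1)
    (xL xR yL yR : ℝ) (hx : xL < xR) (hy : yL < yR)
    (h₁ h₂ : ℝ) (hh₁ : h₁ = (xR - xL) / (M₁ + 1)) (hh₂ : h₂ = (yR - yL) / (M₂ + 1))
    (d e : ℝ → ℝ → ℝ)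
    (hde : ∀ x ∈ Set.Ioo xL xR, ∀ y ∈ Set.Ioo yL yR, 0 ≤ d x y ∧ 0 ≤ e x y)
    (D E A : Matrix (Fin M₂ × Fin M₁) (Fin M₂ × Fin M₁) ℝ)
    (hD : D = Matrix.diagonal fun p => d (xL + ((p.2 : ℕ) + 1) * h₁) (yL + ((p.1 : ℕ) + 1) * h₂))
    (hE : E = Matrix.diagonal fun p => e (xL + ((p.2 : ℕ) + 1) * h₁) (yL + ((p.1 : ℕ) + 1) * h₂))
    (hA : A = (1 / (2 * h₁ ^ α)) • (D * ((1 : Matrix (Fin M₂) (Fin M₂) ℝ) ⊗ₖ Gmat α M₁)) +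
              (1 / (2 * h₂ ^ β)) • (E * (Gmat β M₂ ⊗ₖ (1 : Matrix (Fin M₁) (Fin M₁) ℝ))))
    (Q : Matrix (Fin M₂ × Fin M₁) (Fin M₂ × Fin M₁) ℝ) (hQ : Q.PosDef)
    (hQA : (-(((1 : ℝ) / 2) • (Q * A + (Q * A)ᵀ))).PosSemidef)
    (u f : ℕ → (Fin M₂ × Fin M₁) → ℝ) (φ : (Fin M₂ × Fin M₁) → ℝ) (hu0 : u 0 = φ)
    (heq : ∀ n, 1 ≤ n → n ≤ N →
      (1 / (T / N)) • (u n - u (n - 1)) = A *ᵥ (u (n - 1) + u n) + f n) :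
    ∀ n, ∀ hn1 : 1 ≤ n, n ≤ N →
      h₁ * h₂ * (u n ⬝ᵥ (Q *ᵥ u n)) ≤
        Real.exp (2 * T) * (h₁ * h₂ * (φ ⬝ᵥ (Q *ᵥ φ))) +
        (Real.exp (2 * T) - 1) *
          (Finset.Icc 1 n).sup' (Finset.nonempty_Icc.mpr hn1)
            (fun k => h₁ * h₂ * (f k ⬝ᵥ (Q *ᵥ f k))) := by

  have hh₁p : 0 < h₁ := by
    have hxx : (0:ℝ) < xR - xL := by linarith
    rw [hh₁]; positivity
  have hh₂p : 0 < h₂ := by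
    have hyy : (0:ℝ) < yR - yL := by linarith
    rw [hh₂]; positivity
  clear hA hD hE hde
  clear D E d e hα hβ α β hx hy hh₁ hh₂ xL xR yL yR

  set τ : ℝ := T / N with hτdef
  have hNpos : (0 : ℝ) < N := by exact_mod_cast hN
  have hτpos : 0 < τ := div_pos hT hNpos
  have hτN : τ * N = T := div_mul_cancel₀ T (ne_of_gt hNpos)
  set B : ((Fin M₂ × Fin M₁) → ℝ) → ((Fin M₂ × Fin M₁) → ℝ) → ℝ :=
    fun a b => a ⬝ᵥ Q *ᵥ b with hBdef
  have hQs : Qᵀ = Q := by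
    have := hQ.isHermitian
    simpa [Matrix.IsHermitian] using this
  have hsymm : ∀ a b, B a b = B b a := by
    intro a b
    simp only [hBdef]
    rw [Matrix.dotProduct_mulVec, ← Matrix.mulVec_transpose, hQs, dotProduct_comm]
  have hnn : ∀ a, 0 ≤ B a a := fun a => by simpa using hQ.posSemidef.dotProduct_mulVec_nonneg a
  have haddl : ∀ a b c, B (a + b) c = B a c + B b c := by
    intro a b c; simp [hBdef, add_dotProduct]
  have haddr : ∀ a b c, B a (b + c) = B a b + B a c := by
    intro a b c; simp [hBdef, Matrix.mulVec_add, dotProduct_add]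
  have hsubr : ∀ a b c, B a (b - c) = B a b - B a c := by
    intro a b c; simp [hBdef, Matrix.mulVec_sub, dotProduct_sub]
  have hsubl : ∀ a b c, B (a - b) c = B a c - B b c := by
    intro a b c; simp [hBdef, sub_dotProduct]
  have hsmulr : ∀ (t : ℝ) a b, B a (t • b) = t * B a b := by
    intro t a b; simp [hBdef, Matrix.mulVec_smul, dotProduct_smul, smul_eq_mul]
  have hsmull : ∀ (t : ℝ) a b, B (t • a) b = t * B a b := by
    intro t a b; rw [hsymm, hsmulr, hsymm]
  set Ev : ℕ → ℝ := fun n => B (u n) (u n) with hEv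
  set Fv : ℕ → ℝ := fun n => B (f n) (f n) with hFv
  -- negative semidefiniteness of the symmetric part of QA
  have hneg : ∀ v, B v (A *ᵥ v) ≤ 0 := by
    intro v
    have h0 := hQA.dotProduct_mulVec_nonneg v
    simp only [star_trivial] at h0
    have htr : v ⬝ᵥ ((Q * A)ᵀ) *ᵥ v = v ⬝ᵥ (Q * A) *ᵥ v := by
      rw [Matrix.dotProduct_mulVec, ← Matrix.mulVec_transpose, Matrix.transpose_transpose,
        dotProduct_comm]
    have hexp : v ⬝ᵥ (-(((1:ℝ)/2) • (Q * A + (Q * A)ᵀ))) *ᵥ v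
        = -(v ⬝ᵥ (Q * A) *ᵥ v) := by
      rw [Matrix.neg_mulVec, dotProduct_neg, Matrix.smul_mulVec,
        dotProduct_smul, Matrix.add_mulVec, dotProduct_add, htr, smul_eq_mul]
      ring
    rw [hexp] at h0
    have : v ⬝ᵥ (Q * A) *ᵥ v ≤ 0 := by linarith
    simpa [hBdef, Matrix.mulVec_mulVec] using this
  -- the one-step energy inequality
  have key : ∀ n, 1 ≤ n → n ≤ N →
      (2 - τ) * Ev n ≤ (2 + τ) * Ev (n - 1) + 2 * τ * Fv n := by
    intro n hn1 hnN
    have hstep := heq n hn1 hnN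
    set v : (Fin M₂ × Fin M₁) → ℝ := u (n - 1) + u n with hv
    have hdiff : u n - u (n - 1) = τ • (A *ᵥ v + f n) := by
      rw [← hstep, smul_smul, mul_one_div, div_self (ne_of_gt hτpos), one_smul]
    have e1 : B v (u n - u (n - 1)) = Ev n - Ev (n - 1) := by
      rw [hv, haddl, hsubr, hsubr]
      have := hsymm (u (n - 1)) (u n)
      simp only [hEv]; linarith
    have e2 : B v (u n - u (n - 1)) = τ * B v (A *ᵥ v) + τ * B v (f n) := by
      rw [hdiff, hsmulr, haddr]; ring
    have e3 : B v (f n) ≤ (1 / 4) * B v v + Fv n := by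
      have h0 := hnn (v - (2 : ℝ) • f n)
      have h1 : B ((2:ℝ) • f n) v = 2 * B v (f n) := by
        rw [hsmull, hsymm]
      have h2 : B v ((2:ℝ) • f n) = 2 * B v (f n) := hsmulr 2 v (f n)
      have h3 : B ((2:ℝ) • f n) ((2:ℝ) • f n) = 4 * Fv n := by
        rw [hsmull, hsmulr]; simp only [hFv]; ring
      have hexp : B (v - (2:ℝ) • f n) (v - (2:ℝ) • f n)
          = B v v - 4 * B v (f n) + 4 * Fv n := by
        rw [hsubl, hsubr, hsubr, h1, h2, h3]; ring
      rw [hexp] at h0; linarith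
    have e4 : B v v ≤ 2 * (Ev n + Ev (n - 1)) := by
      have h0 := hnn (u n - u (n - 1))
      have hA1 : B v v = Ev (n-1) + B (u (n-1)) (u n) + B (u n) (u (n-1)) + Ev n := by
        rw [hv, haddl, haddr, haddr]; simp only [hEv]; ring
      have hA2 : B (u n - u (n-1)) (u n - u (n-1))
          = Ev n - B (u n) (u (n-1)) - B (u (n-1)) (u n) + Ev (n-1) := by
        rw [hsubl, hsubr, hsubr]; simp only [hEv]; ring
      rw [hA2] at h0; linarith
    have c3 : τ * B v (f n) ≤ τ * ((1 / 4) * B v v + Fv n) :=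
      mul_le_mul_of_nonneg_left e3 hτpos.le
    have c4 : (τ / 4) * B v v ≤ (τ / 4) * (2 * (Ev n + Ev (n - 1))) :=
      mul_le_mul_of_nonneg_left e4 (by linarith)
    have c5 : τ * B v (A *ᵥ v) ≤ 0 :=
      mul_nonpos_of_nonneg_of_nonpos hτpos.le (hneg v)
    nlinarith [c3, c4, c5, e1, e2]
  -- Gronwall setup
  have h2τ : 0 < 2 - τ := by linarith
  set ρ : ℝ := (2 + τ) / (2 - τ) with hρ
  have hρ1 : 1 ≤ ρ := by
    rw [hρ, le_div_iff₀ h2τ]; linarith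
  have hρmul : (2 - τ) * ρ = 2 + τ := by
    rw [hρ]; field_simp
  have hFnn : ∀ k, 0 ≤ Fv k := fun k => hnn (f k)
  have hE0 : 0 ≤ Ev 0 := hnn (u 0)
  have main : ∀ n, ∀ hn1 : 1 ≤ n, n ≤ N →
      Ev n ≤ ρ ^ n * Ev 0 + (ρ ^ n - 1) *
        (Finset.Icc 1 n).sup' (Finset.nonempty_Icc.mpr hn1) Fv := by
    intro n
    induction n with
    | zero => intro h; omega
    | succ m ih =>
      intro hn1 hnN
      rcases Nat.eq_zero_or_pos m with hm0 | hm1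
      · subst hm0
        have hk := key 1 le_rfl hnN
        simp only [Nat.sub_self] at hk
        have hsup : (Finset.Icc 1 1).sup' (Finset.nonempty_Icc.mpr hn1) Fv = Fv 1 := by
          apply le_antisymm
          · apply Finset.sup'_le
            intro k hk
            simp only [Finset.mem_Icc] at hk
            have : k = 1 := le_antisymm hk.2 hk.1
            rw [this]
          · exact Finset.le_sup' Fv (by simp [Finset.mem_Icc])
        rw [hsup, pow_one]
        have hgoal : (2 - τ) * (ρ * Ev 0 + (ρ - 1) * Fv 1)
            = (2 + τ) * Ev 0 + 2 * τ * Fv 1 := by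
          linear_combination (Ev 0 + Fv 1) * hρmul
        have := hk.trans_eq hgoal.symm
        exact le_of_mul_le_mul_left this h2τ
      · have hmN : m ≤ N := le_trans (Nat.le_succ m) hnN
        have ihm := ih hm1 hmN
        have hk := key (m + 1) (Nat.le_add_left 1 m) hnN
        simp only [Nat.add_sub_cancel] at hk
        set Mn := (Finset.Icc 1 m).sup' (Finset.nonempty_Icc.mpr hm1) Fv with hMn
        set Mn1 := (Finset.Icc 1 (m+1)).sup' (Finset.nonempty_Icc.mpr hn1) Fv with hMn1
        have hsub : Finset.Icc 1 m ⊆ Finset.Icc 1 (m+1) :=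
          Finset.Icc_subset_Icc le_rfl (Nat.le_succ m)
        have hMle : Mn ≤ Mn1 := Finset.sup'_mono Fv hsub _
        have hFle : Fv (m+1) ≤ Mn1 :=
          Finset.le_sup' Fv (by simp [Finset.mem_Icc] : m+1 ∈ Finset.Icc 1 (m+1))
        have hMnn : 0 ≤ Mn1 := le_trans (hFnn (m+1)) hFle
        have hρm : 1 ≤ ρ ^ m := one_le_pow₀ hρ1
        have hρmul' : (2 - τ) * ρ ^ (m+1) = (2 + τ) * ρ ^ m := by
          calc (2 - τ) * ρ ^ (m+1) = ((2 - τ) * ρ) * ρ ^ m := by rw [pow_succ]; ring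
          _ = (2 + τ) * ρ ^ m := by rw [hρmul]
        have P1 : (2 + τ) * Ev m ≤ (2 + τ) * (ρ ^ m * Ev 0 + (ρ ^ m - 1) * Mn) :=
          mul_le_mul_of_nonneg_left ihm (by linarith)
        have P2 : (2 + τ) * (ρ ^ m - 1) * Mn ≤ (2 + τ) * (ρ ^ m - 1) * Mn1 :=
          mul_le_mul_of_nonneg_left hMle
            (mul_nonneg (by linarith) (by linarith))
        have P3 : 2 * τ * Fv (m+1) ≤ 2 * τ * Mn1 :=
          mul_le_mul_of_nonneg_left hFle (by linarith)
        have hchain : (2 - τ) * Ev (m+1)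
            ≤ (2 - τ) * (ρ ^ (m+1) * Ev 0 + (ρ ^ (m+1) - 1) * Mn1) := by
          have expand : (2 - τ) * (ρ ^ (m+1) * Ev 0 + (ρ ^ (m+1) - 1) * Mn1)
              = (2 + τ) * (ρ ^ m * Ev 0) + ((2 + τ) * (ρ ^ m - 1) + 2 * τ) * Mn1 := by
            linear_combination (Ev 0 + Mn1) * hρmul'
          rw [expand]
          have P1' : (2 + τ) * (ρ ^ m * Ev 0 + (ρ ^ m - 1) * Mn)
              = (2 + τ) * (ρ ^ m * Ev 0) + (2 + τ) * (ρ ^ m - 1) * Mn := by ring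
          linarith [P1, P2, P3, hk]
        exact le_of_mul_le_mul_left hchain h2τ
  -- ρ^n ≤ exp (2T)
  have hρexp : ρ ≤ Real.exp (2 * τ) := by
    rw [hρ]; exact rho_le_exp_aux hτpos hτ
  have hρNle : ∀ n, n ≤ N → ρ ^ n ≤ Real.exp (2 * T) := by
    intro n hnN
    calc ρ ^ n ≤ ρ ^ N := pow_le_pow_right₀ hρ1 hnN
    _ ≤ (Real.exp (2 * τ)) ^ N := pow_le_pow_left₀ (by linarith) hρexp N
    _ = Real.exp (2 * τ * N) := by rw [← Real.exp_nat_mul]; ring_nf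
    _ = Real.exp (2 * T) := by rw [mul_assoc, hτN]
  -- finish
  intro n hn1 hnN
  have hmain := main n hn1 hnN
  rw [← hu0]
  set Sn := (Finset.Icc 1 n).sup' (Finset.nonempty_Icc.mpr hn1) Fv with hSn
  have hhh : (0:ℝ) < h₁ * h₂ := mul_pos hh₁p hh₂p
  have hsupc : (Finset.Icc 1 n).sup' (Finset.nonempty_Icc.mpr hn1)
      (fun k => h₁ * h₂ * (f k ⬝ᵥ (Q *ᵥ f k))) = h₁ * h₂ * Sn := by
    rw [hSn]
    exact (Finset.comp_sup'_eq_sup'_comp _ (fun x => h₁ * h₂ * x)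
      (fun x y => mul_max_of_nonneg x y hhh.le)).symm
  rw [hsupc]
  have hρn := hρNle n hnN
  have hSnn : 0 ≤ Sn := le_trans (hFnn n)
    (Finset.le_sup' Fv (by simp [Finset.mem_Icc, hn1] : n ∈ Finset.Icc 1 n))
  have hEn : Ev n ≤ Real.exp (2 * T) * Ev 0 + (Real.exp (2 * T) - 1) * Sn := by
    have t1 : ρ ^ n * Ev 0 ≤ Real.exp (2 * T) * Ev 0 :=
      mul_le_mul_of_nonneg_right hρn hE0
    have t2 : (ρ ^ n - 1) * Sn ≤ (Real.exp (2 * T) - 1) * Sn :=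
      mul_le_mul_of_nonneg_right (by linarith) hSnn
    linarith
  have hfin := mul_le_mul_of_nonneg_left hEn hhh.le
  calc h₁ * h₂ * (u n ⬝ᵥ (Q *ᵥ u n))
      ≤ h₁ * h₂ * (Real.exp (2 * T) * Ev 0 + (Real.exp (2 * T) - 1) * Sn) := hfin
  _ = Real.exp (2 * T) * (h₁ * h₂ * (u 0 ⬝ᵥ (Q *ᵥ u 0))) +
        (Real.exp (2 * T) - 1) * (h₁ * h₂ * Sn) := by
      simp only [hEv, hBdef]; ring
end

section
/- Let T > 0, let N be a positive integer with τ = T/N ≤ 1, and let Q be a symmetric positive definite M₁M₂×M₁M₂ real matrix such that the symmetric part of Q·A, namely (Q·A + (Q·A)ᵀ)/2, is negative semidefinite. Suppose vectors e^0 = 0, e^1, …, e^N ∈ ℝ^{M₁M₂} and R^{1/2}, …, R^{N−1/2} ∈ ℝ^{M₁M₂} satisfy, for n = 1,…,N, (e^n − e^{n−1})/τ = A·(e^{n−1} + e^n) + R^{n−1/2}. Then for every n = 1,…,N: ‖e^n‖²_Q ≤ (exp(2T) − 1)·max_{1≤k≤n} ‖R^{k−1/2}‖²_Q, where ‖v‖²_Q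 = h₁·h₂·vᵀQv. -/
open Matrix Kronecker

private lemma CN_aux (τ h qa qc qr X E2 B : ℝ) (hτpos : 0 < τ) (hτ1 : τ ≤ 1) (hh : 0 < h)
    (hstep : (1 - τ/2) * qc ≤ (1 + τ/2) * qa + τ * qr)
    (hprev : h * qa ≤ (X - 1) * B) (hSr : h * qr ≤ B) (hB0 : 0 ≤ B)
    (hX1 : 1 ≤ X) (hE : (1 + τ)^2 ≤ E2) : h * qc ≤ (X * E2 - 1) * B := by
  have hτ2 : (0:ℝ) < 1 - τ/2 := by linarith
  have hc : 0 ≤ (1 - τ/2) * E2 - (1 + τ/2) := by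
    have h1 : (1 - τ/2) * (1+τ)^2 ≤ (1 - τ/2) * E2 := mul_le_mul_of_nonneg_left hE hτ2.le
    nlinarith [mul_nonneg hτpos.le hτpos.le, mul_nonneg (mul_nonneg hτpos.le hτpos.le) hτpos.le]
  have h1 : (1 - τ/2) * (h * qc) ≤ (1 + τ/2) * (h * qa) + τ * (h * qr) := by
    nlinarith [mul_le_mul_of_nonneg_left hstep hh.le]
  have h2 : (1 + τ/2) * (h * qa) ≤ (1 + τ/2) * ((X - 1) * B) :=
    mul_le_mul_of_nonneg_left hprev (by linarith)
  have h3 : τ * (h * qr) ≤ τ * B := mul_le_mul_of_nonneg_left hSr hτpos.le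
  have hk : (1 + τ/2) * ((X - 1) * B) + τ * B ≤ (1 - τ/2) * ((X * E2 - 1) * B) := by
    nlinarith [mul_nonneg (mul_nonneg hc (by linarith : (0:ℝ) ≤ X)) hB0]
  exact le_of_mul_le_mul_left (by linarith) hτ2

/-- Two-dimensional convergence estimate (Theorem 3.2, in terms of the error equation):
if `Q` is symmetric positive definite with `(QA + (QA)ᵀ)/2` negative semidefinite and the
errors satisfy the Crank–Nicolson/WSGD error equation with truncation errors `Rⁿ⁻¹ᐟ²`, then
`‖eⁿ‖²_Q ≤ (e^{2T} − 1) max_{1≤k≤n}‖Rᵏ⁻¹ᐟ²‖²_Q` where `‖v‖²_Q = h₁ h₂ vᵀQv`. -/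
theorem CN_scheme_2D_error_estimate (α β T : ℝ)
    (hα : α ∈ Set.Ioo (1 : ℝ) 2) (hβ : β ∈ Set.Ioo (1 : ℝ) 2) (hT : 0 < T)
    (M₁ M₂ N : ℕ) (hM₁ : 0 < M₁) (hM₂ : 0 < M₂) (hN : 0 < N) (hτ : T / N ≤ 1)
    (xL xR yL yR : ℝ) (hx : xL < xR) (hy : yL < yR)
    (h₁ h₂ : ℝ) (hh₁ : h₁ = (xR - xL) / (M₁ + 1)) (hh₂ : h₂ = (yR - yL) / (M₂ + 1))
    (d e : ℝ → ℝ → ℝ)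
    (hde : ∀ x ∈ Set.Ioo xL xR, ∀ y ∈ Set.Ioo yL yR, 0 ≤ d x y ∧ 0 ≤ e x y)
    (D E A : Matrix (Fin M₂ × Fin M₁) (Fin M₂ × Fin M₁) ℝ)
    (hD : D = Matrix.diagonal fun p => d (xL + ((p.2 : ℕ) + 1) * h₁) (yL + ((p.1 : ℕ) + 1) * h₂))
    (hE : E = Matrix.diagonal fun p => e (xL + ((p.2 : ℕ) + 1) * h₁) (yL + ((p.1 : ℕ) + 1) * h₂))
    (hA : A = (1 / (2 * h₁ ^ α)) • (D * ((1 : Matrix (Fin M₂) (Fin M₂) ℝ) ⊗ₖ Gmat α M₁)) +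
              (1 / (2 * h₂ ^ β)) • (E * (Gmat β M₂ ⊗ₖ (1 : Matrix (Fin M₁) (Fin M₁) ℝ))))
    (Q : Matrix (Fin M₂ × Fin M₁) (Fin M₂ × Fin M₁) ℝ) (hQ : Q.PosDef)
    (hQA : (-(((1 : ℝ) / 2) • (Q * A + (Q * A)ᵀ))).PosSemidef)
    (er R : ℕ → (Fin M₂ × Fin M₁) → ℝ) (her0 : er 0 = 0)
    (heq : ∀ n, 1 ≤ n → n ≤ N →
      (1 / (T / N)) • (er n - er (n - 1)) = A *ᵥ (er (n - 1) + er n) + R n) :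
    ∀ n, ∀ hn1 : 1 ≤ n, n ≤ N →
      h₁ * h₂ * (er n ⬝ᵥ (Q *ᵥ er n)) ≤
        (Real.exp (2 * T) - 1) *
          (Finset.Icc 1 n).sup' (Finset.nonempty_Icc.mpr hn1)
            (fun k => h₁ * h₂ * (R k ⬝ᵥ (Q *ᵥ R k))) := by
  have hNpos : (0:ℝ) < N := by exact_mod_cast hN
  set τ := T / N with hτdef
  have hτpos : 0 < τ := div_pos hT hNpos
  have hh₁pos : 0 < h₁ := by
    have hxx : 0 < xR - xL := sub_pos.mpr hx
    rw [hh₁]; positivity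
  have hh₂pos : 0 < h₂ := by
    have hyy : 0 < yR - yL := sub_pos.mpr hy
    rw [hh₂]; positivity
  have hhpos : 0 < h₁ * h₂ := mul_pos hh₁pos hh₂pos
  have hq0 : ∀ x : (Fin M₂ × Fin M₁) → ℝ, 0 ≤ x ⬝ᵥ Q *ᵥ x := fun x => by
    simpa using hQ.posSemidef.dotProduct_mulVec_nonneg x
  have hQs : Qᵀ = Q := IsSymm.eq (by simpa using hQ.1)
  have hsym : ∀ x y : (Fin M₂ × Fin M₁) → ℝ, x ⬝ᵥ Q *ᵥ y = y ⬝ᵥ Q *ᵥ x := fun x y => by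
    rw [dotProduct_mulVec, ← hQs, vecMul_transpose, dotProduct_comm, hQs]
  have hQAle : ∀ x : (Fin M₂ × Fin M₁) → ℝ, x ⬝ᵥ (Q*A) *ᵥ x ≤ 0 := fun x => by
    have h := hQA.dotProduct_mulVec_nonneg x
    have ht : x ⬝ᵥ (Q*A)ᵀ *ᵥ x = x ⬝ᵥ (Q*A) *ᵥ x := by
      rw [dotProduct_mulVec, vecMul_transpose, dotProduct_comm]
    simp only [neg_mulVec, smul_mulVec, add_mulVec, dotProduct_neg, dotProduct_smul,
      dotProduct_add, ht, Pi.star_apply, star_trivial, smul_eq_mul] at h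
    linarith
  -- the one-step energy inequality
  have hstep : ∀ m : ℕ, m + 1 ≤ N →
      (1 - τ/2) * (er (m+1) ⬝ᵥ Q *ᵥ er (m+1)) ≤
        (1 + τ/2) * (er m ⬝ᵥ Q *ᵥ er m) + τ * (R (m+1) ⬝ᵥ Q *ᵥ R (m+1)) := by
    intro m hmN
    set a := er m
    set c := er (m+1)
    set r := R (m+1)
    have hdiff : c - a = τ • (A *ᵥ (a + c)) + τ • r := by
      have h := heq (m+1) (by omega) hmN
      simp only [Nat.add_sub_cancel] at h
      calc c - a = τ • ((1/τ) • (c - a)) := by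
            rw [smul_smul, mul_one_div, div_self hτpos.ne', one_smul]
        _ = τ • (A *ᵥ (a + c) + r) := by rw [h]
        _ = τ • (A *ᵥ (a + c)) + τ • r := smul_add _ _ _
    set u := a + c with hu
    have e1 : c ⬝ᵥ Q *ᵥ c - a ⬝ᵥ Q *ᵥ a = u ⬝ᵥ Q *ᵥ (c - a) := by
      simp only [hu, mulVec_sub, dotProduct_sub, add_dotProduct]
      have h1 := hsym a c
      simp only [dotProduct_mulVec] at h1 ⊢
      linarith
    have e2 : u ⬝ᵥ Q *ᵥ (c - a) = τ * (u ⬝ᵥ (Q*A) *ᵥ u) + τ * (u ⬝ᵥ Q *ᵥ r) := by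
      rw [hdiff]
      simp only [mulVec_add, dotProduct_add, Matrix.mulVec_smul, dotProduct_smul, smul_eq_mul,
        mulVec_mulVec]
    have e3 : u ⬝ᵥ Q *ᵥ r ≤ (1/4) * (u ⬝ᵥ Q *ᵥ u) + r ⬝ᵥ Q *ᵥ r := by
      have h0 := hq0 ((1/2 : ℝ) • u - r)
      have h1 := hsym u r
      simp only [mulVec_sub, Matrix.mulVec_smul, dotProduct_sub, sub_dotProduct,
        smul_dotProduct, dotProduct_smul, smul_eq_mul] at h0
      linarith
    have e4 : u ⬝ᵥ Q *ᵥ u ≤ 2 * (a ⬝ᵥ Q *ᵥ a) + 2 * (c ⬝ᵥ Q *ᵥ c) := by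
      have h0 := hq0 (a - c)
      have h1 := hsym a c
      simp only [hu, mulVec_sub, mulVec_add, dotProduct_sub, dotProduct_add, sub_dotProduct,
        add_dotProduct] at h0 ⊢
      linarith
    have e5 := hQAle u
    nlinarith [hq0 r, hq0 u, mul_le_mul_of_nonneg_left e3 hτpos.le,
      mul_le_mul_of_nonneg_left e4 hτpos.le, mul_nonpos_of_nonneg_of_nonpos hτpos.le e5]
  have hE2τ : (1 + τ)^2 ≤ Real.exp (2 * τ) := by
    have h1 : 1 + τ ≤ Real.exp τ := by linarith [Real.add_one_le_exp τ]
    have h2 : (0:ℝ) ≤ 1 + τ := by linarith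
    calc (1 + τ)^2 ≤ (Real.exp τ)^2 := by nlinarith
      _ = Real.exp (2 * τ) := by rw [sq, ← Real.exp_add, two_mul]
  -- key induction
  have key : ∀ m : ℕ, ∀ hm1 : 1 ≤ m, m ≤ N →
      h₁ * h₂ * (er m ⬝ᵥ Q *ᵥ er m) ≤
        (Real.exp (2 * τ * m) - 1) *
          (Finset.Icc 1 m).sup' (Finset.nonempty_Icc.mpr hm1)
            (fun k => h₁ * h₂ * (R k ⬝ᵥ (Q *ᵥ R k))) := by
    intro m
    induction m with
    | zero => intro hm1; exact absurd hm1 (by omega)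
    | succ m ih =>
      intro hm1 hmN
      set B := (Finset.Icc 1 (m+1)).sup' (Finset.nonempty_Icc.mpr hm1)
          (fun k => h₁ * h₂ * (R k ⬝ᵥ (Q *ᵥ R k))) with hB
      have hB0 : 0 ≤ B := by
        have h1 : (1:ℕ) ∈ Finset.Icc 1 (m+1) := by simp
        have := Finset.le_sup' (fun k => h₁ * h₂ * (R k ⬝ᵥ (Q *ᵥ R k))) h1
        exact le_trans (mul_nonneg hhpos.le (hq0 (R 1))) this
      have hSr : h₁ * h₂ * (R (m+1) ⬝ᵥ Q *ᵥ R (m+1)) ≤ B := by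
        have h1 : m+1 ∈ Finset.Icc 1 (m+1) := by simp
        exact Finset.le_sup' (fun k => h₁ * h₂ * (R k ⬝ᵥ (Q *ᵥ R k))) h1
      have hX1 : (1:ℝ) ≤ Real.exp (2 * τ * m) := by
        rw [← Real.exp_zero]
        apply Real.exp_le_exp.mpr; positivity
      have hprev : h₁ * h₂ * (er m ⬝ᵥ Q *ᵥ er m) ≤ (Real.exp (2 * τ * m) - 1) * B := by
        rcases Nat.eq_zero_or_pos m with hm0 | hmpos
        · subst hm0
          simp [her0]
        · have h1 := ih hmpos (by omega)
          have h2 : (Finset.Icc 1 m).sup' (Finset.nonempty_Icc.mpr hmpos)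
              (fun k => h₁ * h₂ * (R k ⬝ᵥ (Q *ᵥ R k))) ≤ B := by
            apply Finset.sup'_mono
            exact Finset.Icc_subset_Icc_right (by omega)
          calc h₁ * h₂ * (er m ⬝ᵥ Q *ᵥ er m) ≤ _ := h1
            _ ≤ (Real.exp (2 * τ * m) - 1) * B := by
              apply mul_le_mul_of_nonneg_left h2 (by linarith)
      have hEX : Real.exp (2 * τ * ((m:ℕ)+1 : ℕ)) =
          Real.exp (2 * τ * m) * Real.exp (2 * τ) := by
        rw [← Real.exp_add]
        congr 1
        push_cast
        ring
      calc h₁ * h₂ * (er (m+1) ⬝ᵥ Q *ᵥ er (m+1)) ≤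
          (Real.exp (2 * τ * m) * Real.exp (2 * τ) - 1) * B :=
            CN_aux τ (h₁ * h₂) (er m ⬝ᵥ Q *ᵥ er m) (er (m+1) ⬝ᵥ Q *ᵥ er (m+1))
              (R (m+1) ⬝ᵥ Q *ᵥ R (m+1)) (Real.exp (2 * τ * m)) (Real.exp (2 * τ)) B
              hτpos hτ hhpos (hstep m hmN) hprev hSr hB0 hX1 hE2τ
        _ = (Real.exp (2 * τ * ((m:ℕ)+1 : ℕ)) - 1) * B := by rw [hEX]
  intro n hn1 hnN
  have h1 := key n hn1 hnN
  have hB0 : 0 ≤ (Finset.Icc 1 n).sup' (Finset.nonempty_Icc.mpr hn1)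
      (fun k => h₁ * h₂ * (R k ⬝ᵥ (Q *ᵥ R k))) := by
    have hm : (1:ℕ) ∈ Finset.Icc 1 n := by simp [hn1]
    exact le_trans (mul_nonneg hhpos.le (hq0 (R 1)))
      (Finset.le_sup' (fun k => h₁ * h₂ * (R k ⬝ᵥ (Q *ᵥ R k))) hm)
  refine le_trans h1 ?_
  apply mul_le_mul_of_nonneg_right _ hB0
  have hτn : 2 * τ * n ≤ 2 * T := by
    have hn : (n:ℝ) ≤ N := by exact_mod_cast hnN
    have h2 : T / ↑N * ↑n ≤ T := by
      rw [div_mul_eq_mul_div, div_le_iff₀ hNpos]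
      nlinarith
    rw [hτdef]
    linarith
  have := Real.exp_le_exp.mpr hτn
  linarith
end

section
/- Suppose the coefficients are separable: d(x,y) = d̃(x)·d̂(y) and e(x,y) = ẽ(x)·ê(y), where 0 < d̃_− ≤ d̃(x) ≤ d̃_+ and 0 < ê_− ≤ ê(y) ≤ ê_+ for positive constants d̃_−, d̃_+, ê_−, ê_+, and d̂ ≥ 0, ẽ ≥ 0. Let D̃ = diag(d̃(x_1),…,d̃(x_{M₁})), D̂ = diag(d̂(y_1),…,d̂(y_{M₂})), Ẽ = diag(ẽ(x_1),…,ẽ(x_{M₁})), Ê = diag(ê(y_1),…,ê(y_{M₂})), so that D = D̂ ⊗ D̃ and E = Ê ⊗ Ẽ. Then X = Ê⁻¹ ⊗ D̃⁻¹ is symmetric positive definite and the symmetric part of X·A, namely (X·A + (X·A)ᵀ)/2, is negative semidefinite. -/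
open Matrix Kronecker

open Finset
set_option linter.unusedSectionVars false

noncomputable def Scoef (γ : ℝ) : ℕ → ℝ
  | 0 => 1
  | (n+1) => (1 - γ / (n + 1 : ℕ)) * Scoef γ n

lemma gcoef_succ_eq (γ : ℝ) (n : ℕ) :
    gcoef γ (n + 1) = -(γ / (n + 1 : ℕ)) * Scoef γ n := by
  induction n with
  | zero => simp [gcoef, Scoef]
  | succ n ih =>
      rw [show n+1+1 = (n+1)+1 from rfl, gcoef, ih, Scoef]
      have h1 : ((n:ℝ) + 1) ≠ 0 := by positivity
      have h2 : ((n:ℝ) + 1 + 1) ≠ 0 := by positivity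
      push_cast
      field_simp
      ring

lemma sum_gcoef (γ : ℝ) (n : ℕ) :
    ∑ k ∈ range (n + 1), gcoef γ k = Scoef γ n := by
  induction n with
  | zero => simp [gcoef, Scoef]
  | succ n ih =>
      rw [Finset.sum_range_succ, ih, gcoef_succ_eq, Scoef]
      push_cast
      ring

section signs
variable {γ : ℝ} (h1 : 1 < γ) (h2 : γ < 2)
include h1 h2

lemma Scoef_nonpos (n : ℕ) : Scoef γ (n + 1) ≤ 0 := by
  induction n with
  | zero =>
      show (1 - γ / ((0:ℕ) + 1 : ℕ)) * Scoef γ 0 ≤ 0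
      simp [Scoef]; linarith
  | succ n ih =>
      show (1 - γ / ((n + 1 : ℕ) + 1 : ℕ)) * Scoef γ (n+1) ≤ 0
      apply mul_nonpos_of_nonneg_of_nonpos _ ih
      have : γ / ((n + 1 : ℕ) + 1 : ℕ) ≤ 1 := by
        rw [div_le_one (by positivity)]
        push_cast; linarith
      linarith

lemma gcoef_nonneg (n : ℕ) : 0 ≤ gcoef γ (n + 2) := by
  rw [gcoef_succ_eq]
  have hs := Scoef_nonpos h1 h2 n
  have : (0:ℝ) ≤ γ / ((n+1 : ℕ) + 1 : ℕ) := by positivity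
  nlinarith

lemma wcoef_one_neg : wcoef γ 1 < 0 := by
  show γ / 2 * gcoef γ 1 + (2 - γ) / 2 * gcoef γ 0 < 0
  have : gcoef γ 1 = -γ := by simp [gcoef]
  rw [this]
  simp [gcoef]
  nlinarith

lemma wcoef_nonneg (n : ℕ) : 0 ≤ wcoef γ (n + 3) := by
  show 0 ≤ γ / 2 * gcoef γ (n+3) + (2 - γ) / 2 * gcoef γ (n+2)
  have g3 := gcoef_nonneg h1 h2 (n+1)
  have g2 := gcoef_nonneg h1 h2 n
  nlinarith

lemma Scoef_succ_eq (n : ℕ) : Scoef γ (n + 1) = Scoef γ n + gcoef γ (n + 1) := by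
  rw [← sum_gcoef, ← sum_gcoef, Finset.sum_range_succ]

lemma sum_wcoef (n : ℕ) :
    ∑ k ∈ range (n + 2), wcoef γ k
      = γ / 2 * Scoef γ (n + 1) + (2 - γ) / 2 * Scoef γ n := by
  induction n with
  | zero =>
      rw [show (0+2) = 2 from rfl]
      rw [Finset.sum_range_succ, Finset.sum_range_one]
      rw [Scoef_succ_eq h1 h2 0]
      show wcoef γ 0 + wcoef γ 1 = _
      rw [show wcoef γ 0 = γ / 2 * gcoef γ 0 from rfl,
        show wcoef γ 1 = γ / 2 * gcoef γ 1 + (2 - γ) / 2 * gcoef γ 0 from rfl]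
      simp [gcoef, Scoef]
      ring
  | succ n ih =>
      rw [Finset.sum_range_succ, ih,
        show wcoef γ (n+2) = γ / 2 * gcoef γ (n+2) + (2 - γ) / 2 * gcoef γ (n+1) from rfl,
        Scoef_succ_eq h1 h2 (n+1), Scoef_succ_eq h1 h2 n]
      ring

lemma sum_wcoef_nonpos (n : ℕ) : ∑ k ∈ range (n + 3), wcoef γ k ≤ 0 := by
  rw [show n + 3 = (n+1) + 2 from rfl, sum_wcoef h1 h2]
  have s1 := Scoef_nonpos h1 h2 (n+1)
  have s2 := Scoef_nonpos h1 h2 n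
  nlinarith

end signs

lemma posSemidef_neg_of_diagdom {n : Type*} [Fintype n] [DecidableEq n]
    (H : Matrix n n ℝ) (hsym : Hᵀ = H)
    (hoff : ∀ i j, i ≠ j → 0 ≤ H i j)
    (hrow : ∀ i, ∑ j, H i j ≤ 0) : (-H).PosSemidef := by
  have hsym' : ∀ i j, H j i = H i j := fun i j => congrFun (congrFun hsym i) j
  rw [posSemidef_iff_dotProduct_mulVec]
  constructor
  · show (-H)ᴴ = -H
    ext i j
    simp only [conjTranspose_apply, Matrix.neg_apply, star_trivial, neg_inj]
    exact hsym' i j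
  · intro x
    rw [star_trivial]
    set H' : n → n → ℝ := fun i j => if i = j then 0 else H i j with hH'def
    have hH'symm : ∀ i j, H' i j = H' j i := by
      intro i j
      by_cases h : i = j
      · subst h; rfl
      · simp [hH'def, h, Ne.symm h, hsym' i j]
    have hH'nonneg : ∀ i j, 0 ≤ H' i j := by
      intro i j
      by_cases h : i = j
      · simp [hH'def, h]
      · simp [hH'def, h]; exact hoff i j h
    have key : x ⬝ᵥ ((-H) *ᵥ x) =
        (∑ i, (-(∑ j, H i j)) * x i ^ 2)
        + ((∑ i, ∑ j, H' i j * x i ^ 2) - (∑ i, ∑ j, H' i j * (x i * x j))) := by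
      have lhs_eq : x ⬝ᵥ ((-H) *ᵥ x) = ∑ i, ∑ j, -(H i j * (x i * x j)) := by
        simp only [dotProduct, mulVec, Matrix.neg_apply, Finset.mul_sum]
        exact Finset.sum_congr rfl fun i _ => Finset.sum_congr rfl fun j _ => by ring
      have rowexp : (∑ i, (-(∑ j, H i j)) * x i ^ 2) = ∑ i, ∑ j, -(H i j * x i ^ 2) := by
        refine Finset.sum_congr rfl fun i _ => ?_
        rw [neg_mul, Finset.sum_mul, ← Finset.sum_neg_distrib]
      rw [lhs_eq, rowexp, ← Finset.sum_sub_distrib, ← Finset.sum_add_distrib]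
      refine Finset.sum_congr rfl fun i _ => ?_
      rw [← Finset.sum_sub_distrib, ← Finset.sum_add_distrib]
      refine Finset.sum_congr rfl fun j _ => ?_
      by_cases h : i = j
      · subst h
        have hz : H' i i = 0 := by simp [hH'def]
        rw [hz]; ring
      · simp only [hH'def, if_neg h]; ring
    rw [key]
    have t1 : 0 ≤ ∑ i, (-(∑ j, H i j)) * x i ^ 2 :=
      Finset.sum_nonneg fun i _ => mul_nonneg (neg_nonneg.2 (hrow i)) (sq_nonneg _)
    have hq : 0 ≤ ∑ i, ∑ j, H' i j * (x i - x j) ^ 2 :=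
      Finset.sum_nonneg fun i _ => Finset.sum_nonneg fun j _ =>
        mul_nonneg (hH'nonneg i j) (sq_nonneg _)
    have hswap : (∑ i, ∑ j, H' i j * x j ^ 2) = ∑ i, ∑ j, H' i j * x i ^ 2 := by
      rw [Finset.sum_comm]
      exact Finset.sum_congr rfl fun i _ => Finset.sum_congr rfl fun j _ => by
        rw [hH'symm]
    have expand : ∑ i, ∑ j, H' i j * (x i - x j) ^ 2
        = (∑ i, ∑ j, H' i j * x i ^ 2) + (∑ i, ∑ j, H' i j * x j ^ 2)
          - 2 * (∑ i, ∑ j, H' i j * (x i * x j)) := by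
      rw [Finset.mul_sum, ← Finset.sum_add_distrib, ← Finset.sum_sub_distrib]
      refine Finset.sum_congr rfl fun i _ => ?_
      rw [Finset.mul_sum, ← Finset.sum_add_distrib, ← Finset.sum_sub_distrib]
      exact Finset.sum_congr rfl fun j _ => by ring
    linarith
lemma Gmat_apply (γ : ℝ) (m : ℕ) (i j : Fin m) :
    Gmat γ m i j = if (j : ℕ) ≤ (i : ℕ) + 1 then wcoef γ ((i : ℕ) + 1 - (j : ℕ)) else 0 := rfl

lemma rowsum_eq (γ : ℝ) (m : ℕ) (i : Fin m) :
    ∑ j : Fin m, Gmat γ m i j =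
      if (i : ℕ) + 2 ≤ m then ∑ k ∈ range ((i : ℕ) + 2), wcoef γ k
      else (∑ k ∈ range ((i : ℕ) + 2), wcoef γ k) - wcoef γ 0 := by
  have hconv : ∑ j : Fin m, Gmat γ m i j
      = ∑ j ∈ range m, (if j ≤ (i : ℕ) + 1 then wcoef γ ((i : ℕ) + 1 - j) else 0) := by
    rw [← Fin.sum_univ_eq_sum_range (fun j => if j ≤ (i : ℕ) + 1 then wcoef γ ((i : ℕ) + 1 - j) else 0) m]
    exact Finset.sum_congr rfl fun j _ => rfl
  rw [hconv]
  by_cases hc : (i : ℕ) + 2 ≤ m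
  · rw [if_pos hc]
    rw [← Finset.sum_range_reflect (wcoef γ) ((i : ℕ) + 2)]
    rw [Finset.range_eq_Ico, ← Finset.sum_Ico_consecutive _ (Nat.zero_le ((i:ℕ)+2)) hc]
    have h2 : ∑ j ∈ Finset.Ico ((i:ℕ)+2) m,
        (if j ≤ (i : ℕ) + 1 then wcoef γ ((i : ℕ) + 1 - j) else 0) = 0 := by
      apply Finset.sum_eq_zero
      intro j hj
      rw [Finset.mem_Ico] at hj
      rw [if_neg (by omega)]
    rw [h2, add_zero]
    refine Finset.sum_congr (Finset.range_eq_Ico _).symm fun j hj => ?_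
    rw [Finset.mem_range] at hj
    rw [if_pos (by omega)]
    congr 1
  · -- here (i:ℕ) + 1 = m
    have him : (i : ℕ) + 1 = m := by have := i.isLt; omega
    rw [if_neg hc]
    have hall : ∑ j ∈ range m, (if j ≤ (i : ℕ) + 1 then wcoef γ ((i : ℕ) + 1 - j) else 0)
        = ∑ j ∈ range m, wcoef γ ((i:ℕ) + 1 - j) := by
      refine Finset.sum_congr rfl fun j hj => ?_
      rw [Finset.mem_range] at hj
      rw [if_pos (by omega)]
    rw [hall]
    have hrefl : ∑ j ∈ range m, wcoef γ ((i:ℕ) + 1 - j)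
        = ∑ j ∈ range m, wcoef γ (j + 1) := by
      rw [← Finset.sum_range_reflect (fun t => wcoef γ (t + 1)) m]
      refine Finset.sum_congr rfl fun j hj => ?_
      rw [Finset.mem_range] at hj
      congr 1
      omega
    rw [hrefl]
    have : ∑ k ∈ range ((i:ℕ) + 2), wcoef γ k
        = (∑ j ∈ range ((i:ℕ)+1), wcoef γ (j + 1)) + wcoef γ 0 := Finset.sum_range_succ' _ _
    rw [him] at this
    rw [this]
    ring

lemma colsum_eq (γ : ℝ) (m : ℕ) (i : Fin m) :
    ∑ j : Fin m, Gmat γ m j i =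
      if (i : ℕ) = 0 then (∑ k ∈ range (m + 1), wcoef γ k) - wcoef γ 0
      else ∑ k ∈ range (m - (i : ℕ) + 1), wcoef γ k := by
  have hconv : ∑ j : Fin m, Gmat γ m j i
      = ∑ j ∈ range m, (if (i : ℕ) ≤ j + 1 then wcoef γ (j + 1 - (i : ℕ)) else 0) := by
    rw [← Fin.sum_univ_eq_sum_range (fun j => if (i : ℕ) ≤ j + 1 then wcoef γ (j + 1 - (i : ℕ)) else 0) m]
    exact Finset.sum_congr rfl fun j _ => rfl
  rw [hconv]
  by_cases hc : (i : ℕ) = 0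
  · rw [if_pos hc]
    have hall : ∑ j ∈ range m, (if (i : ℕ) ≤ j + 1 then wcoef γ (j + 1 - (i : ℕ)) else 0)
        = ∑ j ∈ range m, wcoef γ (j + 1) := by
      refine Finset.sum_congr rfl fun j hj => ?_
      rw [if_pos (by omega)]
      congr 1
      omega
    rw [hall]
    have : ∑ k ∈ range (m + 1), wcoef γ k
        = (∑ j ∈ range m, wcoef γ (j + 1)) + wcoef γ 0 := Finset.sum_range_succ' _ _
    rw [this]; ring
  · rw [if_neg hc]
    have hi1 : 1 ≤ (i : ℕ) := by omega
    have him : (i : ℕ) ≤ m := le_of_lt i.isLt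
    rw [Finset.range_eq_Ico, ← Finset.sum_Ico_consecutive _ (Nat.zero_le ((i:ℕ)-1)) (by omega : (i:ℕ)-1 ≤ m)]
    have h0 : ∑ j ∈ Finset.Ico 0 ((i:ℕ)-1),
        (if (i : ℕ) ≤ j + 1 then wcoef γ (j + 1 - (i : ℕ)) else 0) = 0 := by
      apply Finset.sum_eq_zero
      intro j hj
      rw [Finset.mem_Ico] at hj
      rw [if_neg (by omega)]
    rw [h0, zero_add]
    rw [Finset.sum_Ico_eq_sum_range]
    have hlen : m - ((i:ℕ) - 1) = m - (i:ℕ) + 1 := by omega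
    rw [hlen]
    refine Finset.sum_congr rfl fun j hj => ?_
    rw [if_pos (by omega)]
    congr 1
    omega

section main
variable {γ : ℝ} (h1 : 1 < γ) (h2 : γ < 2)
include h1 h2

lemma w0w2_nonneg : 0 ≤ wcoef γ 0 + wcoef γ 2 := by
  have e0 : wcoef γ 0 = γ / 2 * gcoef γ 0 := rfl
  have e2 : wcoef γ 2 = γ / 2 * gcoef γ 2 + (2 - γ) / 2 * gcoef γ 1 := rfl
  have g1 : gcoef γ 1 = -γ := by simp [gcoef]
  have g2 : gcoef γ 2 = (1 - (γ + 1) / 2) * (-γ) := by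
    show (1 - (γ + 1) / ((1:ℕ) + 1 : ℕ)) * gcoef γ 1 = _
    rw [g1]; norm_num
  rw [e0, e2, g1, g2]
  show 0 ≤ γ / 2 * gcoef γ 0 + _
  simp only [gcoef]
  nlinarith [mul_nonneg (mul_nonneg (by linarith : (0:ℝ) ≤ γ) (by linarith : (0:ℝ) ≤ γ - 1)) (by linarith : (0:ℝ) ≤ γ + 2)]

lemma Psum_nonpos {t : ℕ} (ht : 3 ≤ t) : ∑ k ∈ range t, wcoef γ k ≤ 0 := by
  obtain ⟨n, rfl⟩ := Nat.exists_eq_add_of_le ht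
  rw [show 3 + n = n + 3 by omega]
  exact sum_wcoef_nonpos h1 h2 n

lemma P2_eq : ∑ k ∈ range 2, wcoef γ k = wcoef γ 0 + wcoef γ 1 := by
  rw [Finset.sum_range_succ, Finset.sum_range_one]

lemma Gmat_offdiag_nonneg {m : ℕ} (i j : Fin m) (hij : (j : ℕ) < (i : ℕ)) :
    0 ≤ Gmat γ m i j + Gmat γ m j i := by
  rw [Gmat_apply, Gmat_apply, if_pos (by omega)]
  by_cases hc : (i : ℕ) ≤ (j : ℕ) + 1
  · -- i = j + 1
    have hi : (i : ℕ) = (j : ℕ) + 1 := by omega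
    rw [if_pos hc]
    rw [show (i:ℕ) + 1 - (j:ℕ) = 2 by omega, show (j:ℕ) + 1 - (i:ℕ) = 0 by omega]
    have := w0w2_nonneg h1 h2
    linarith
  · rw [if_neg hc, add_zero]
    rw [show (i:ℕ) + 1 - (j:ℕ) = ((i:ℕ) - (j:ℕ) - 2) + 3 by omega]
    exact wcoef_nonneg h1 h2 _

lemma negSymGmat_posSemidef (m : ℕ) :
    (-(Gmat γ m + (Gmat γ m)ᵀ)).PosSemidef := by
  have hw1 := wcoef_one_neg h1 h2 (γ := γ)
  apply posSemidef_neg_of_diagdom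
  · rw [transpose_add, transpose_transpose]; exact add_comm _ _
  · intro i j hij
    rw [Matrix.add_apply, Matrix.transpose_apply]
    have hne : (i : ℕ) ≠ (j : ℕ) := fun h => hij (Fin.ext h)
    rcases Nat.lt_or_ge (j : ℕ) (i : ℕ) with h | h
    · exact Gmat_offdiag_nonneg h1 h2 i j h
    · have h' : (i : ℕ) < (j : ℕ) := by omega
      have := Gmat_offdiag_nonneg h1 h2 j i h'
      linarith
  · intro i
    have hsplit : ∑ j, (Gmat γ m + (Gmat γ m)ᵀ) i j
        = (∑ j, Gmat γ m i j) + (∑ j, Gmat γ m j i) := by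
      rw [← Finset.sum_add_distrib]
      exact Finset.sum_congr rfl fun j _ => rfl
    rw [hsplit, rowsum_eq, colsum_eq]
    have him : (i : ℕ) < m := i.isLt
    by_cases hc1 : (i : ℕ) + 2 ≤ m <;> by_cases hc2 : (i : ℕ) = 0
    · -- interior start: i = 0, m ≥ 2
      rw [if_pos hc1, if_pos hc2, hc2]
      have hP2 := P2_eq h1 h2 (γ := γ)
      have hPm : ∑ k ∈ range (m + 1), wcoef γ k ≤ 0 := Psum_nonpos h1 h2 (by omega)
      rw [show (0:ℕ) + 2 = 2 by omega, hP2]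
      linarith
    · rw [if_pos hc1, if_neg hc2]
      have hPa : ∑ k ∈ range ((i:ℕ) + 2), wcoef γ k ≤ 0 := Psum_nonpos h1 h2 (by omega)
      have hPb : ∑ k ∈ range (m - (i:ℕ) + 1), wcoef γ k ≤ 0 := Psum_nonpos h1 h2 (by omega)
      linarith
    · -- i = 0 and i + 1 = m, so m = 1
      rw [if_neg hc1, if_pos hc2]
      have hm1 : m = 1 := by omega
      have hP2 := P2_eq h1 h2 (γ := γ)
      rw [hc2, hm1]
      rw [show (0:ℕ) + 2 = 2 by omega, hP2]
      linarith
    · -- i + 1 = m, i ≥ 1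
      rw [if_neg hc1, if_neg hc2]
      have hieq : (i : ℕ) + 1 = m := by omega
      have hPa : ∑ k ∈ range ((i:ℕ) + 2), wcoef γ k ≤ 0 := Psum_nonpos h1 h2 (by omega)
      have hmi : m - (i : ℕ) + 1 = 2 := by omega
      rw [hmi, P2_eq h1 h2]
      have hw0 : wcoef γ 0 = γ / 2 * gcoef γ 0 := rfl
      have : wcoef γ 0 + wcoef γ 1 - wcoef γ 0 = wcoef γ 1 := by ring
      linarith
end main
open Matrix Kronecker Finset

lemma posSemidef_smul_real {n : Type*} [Fintype n] {M : Matrix n n ℝ}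
    (h : M.PosSemidef) {c : ℝ} (hc : 0 ≤ c) : (c • M).PosSemidef := by
  rw [posSemidef_iff_dotProduct_mulVec]
  constructor
  · show (c • M)ᴴ = c • M
    rw [conjTranspose_smul, star_trivial, h.1]
  · intro x
    rw [smul_mulVec, dotProduct_smul, smul_eq_mul]
    exact mul_nonneg hc (h.dotProduct_mulVec_nonneg x)

lemma kron_transpose {l m n p : Type*} (A : Matrix l m ℝ) (B : Matrix n p ℝ) :
    (A ⊗ₖ B)ᵀ = Aᵀ ⊗ₖ Bᵀ := by
  ext ⟨a, b⟩ ⟨c, e⟩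
  rfl

lemma posSemidef_diag_kron {n m : Type*} [Fintype n] [DecidableEq n] [Fintype m]
    [DecidableEq m] (d : n → ℝ) (hd : ∀ i, 0 ≤ d i) (S : Matrix m m ℝ)
    (hS : S.PosSemidef) : ((Matrix.diagonal d) ⊗ₖ S).PosSemidef := by
  have hSsym : ∀ a b, S b a = S a b := fun a b => by
    have := congrFun (congrFun hS.1 a) b
    simpa using this
  rw [posSemidef_iff_dotProduct_mulVec]
  constructor
  · show _ᴴ = _
    ext ⟨a, b⟩ ⟨c, e⟩
    simp only [conjTranspose_apply, kroneckerMap_apply, star_trivial]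
    rcases eq_or_ne a c with rfl | h
    · rw [hSsym]
    · rw [diagonal_apply_ne _ h, diagonal_apply_ne _ (Ne.symm h), zero_mul, zero_mul]
  · intro x
    rw [star_trivial]
    have hmv : ∀ a b, ((Matrix.diagonal d ⊗ₖ S) *ᵥ x) (a, b)
        = d a * ∑ e, S b e * x (a, e) := by
      intro a b
      show ∑ q : n × m, (Matrix.diagonal d ⊗ₖ S) (a, b) q * x q = _
      rw [Fintype.sum_prod_type]
      have hinner : ∀ c, (∑ e, (Matrix.diagonal d ⊗ₖ S) (a, b) (c, e) * x (c, e))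
          = if a = c then d a * ∑ e, S b e * x (c, e) else 0 := by
        intro c
        by_cases h : a = c
        · subst h
          rw [if_pos rfl, Finset.mul_sum]
          refine Finset.sum_congr rfl fun e _ => ?_
          simp only [kroneckerMap_apply, diagonal_apply_eq]
          ring
        · rw [if_neg h]
          apply Finset.sum_eq_zero
          intro e _
          simp only [kroneckerMap_apply, diagonal_apply_ne _ h, zero_mul]
      rw [Finset.sum_congr rfl fun c _ => hinner c, Finset.sum_ite_eq]
      simp
    rw [dotProduct, Fintype.sum_prod_type]
    simp only [hmv]
    apply Finset.sum_nonneg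
    intro a _
    have hq := hS.dotProduct_mulVec_nonneg (fun b => x (a, b))
    rw [star_trivial] at hq
    have : ∑ b, x (a, b) * (d a * ∑ e, S b e * x (a, e))
        = d a * ∑ b, x (a, b) * ∑ e, S b e * x (a, e) := by
      rw [Finset.mul_sum]
      exact Finset.sum_congr rfl fun b _ => by ring
    rw [this]
    exact mul_nonneg (hd a) hq

lemma posSemidef_kron_diag {n m : Type*} [Fintype n] [DecidableEq n] [Fintype m]
    [DecidableEq m] (d : m → ℝ) (hd : ∀ i, 0 ≤ d i) (S : Matrix n n ℝ)
    (hS : S.PosSemidef) : (S ⊗ₖ (Matrix.diagonal d)).PosSemidef := by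
  have hSsym : ∀ a b, S b a = S a b := fun a b => by
    have := congrFun (congrFun hS.1 a) b
    simpa using this
  rw [posSemidef_iff_dotProduct_mulVec]
  constructor
  · show _ᴴ = _
    ext ⟨a, b⟩ ⟨c, e⟩
    simp only [conjTranspose_apply, kroneckerMap_apply, star_trivial]
    rcases eq_or_ne b e with rfl | h
    · rw [hSsym]
    · rw [diagonal_apply_ne _ h, diagonal_apply_ne _ (Ne.symm h), mul_zero, mul_zero]
  · intro x
    rw [star_trivial]
    have hmv : ∀ a b, ((S ⊗ₖ Matrix.diagonal d) *ᵥ x) (a, b)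
        = d b * ∑ c, S a c * x (c, b) := by
      intro a b
      show ∑ q : n × m, (S ⊗ₖ Matrix.diagonal d) (a, b) q * x q = _
      rw [Fintype.sum_prod_type]
      rw [Finset.mul_sum]
      refine Finset.sum_congr rfl fun c _ => ?_
      have hinner : (∑ e, (S ⊗ₖ Matrix.diagonal d) (a, b) (c, e) * x (c, e))
          = if b ∈ (Finset.univ : Finset m) then S a c * x (c, b) * d b else 0 := by
        rw [← Finset.sum_ite_eq (Finset.univ : Finset m) b
          (fun e => S a c * x (c, e) * d b)]
        refine Finset.sum_congr rfl fun e _ => ?_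
        by_cases h : b = e
        · subst h
          simp only [kroneckerMap_apply, diagonal_apply_eq, eq_self_iff_true, if_true]
          ring
        · simp only [kroneckerMap_apply, diagonal_apply_ne _ h, mul_zero, zero_mul,
            if_neg h]
      rw [hinner]
      simp only [Finset.mem_univ, if_true]
      ring
    rw [dotProduct, Fintype.sum_prod_type, Finset.sum_comm]
    have hterm : ∀ b, (∑ a, x (a, b) * ((S ⊗ₖ Matrix.diagonal d) *ᵥ x) (a, b))
        = d b * ∑ a, x (a, b) * ∑ c, S a c * x (c, b) := by
      intro b
      rw [Finset.mul_sum]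
      refine Finset.sum_congr rfl fun a _ => ?_
      rw [hmv]
      ring
    rw [Finset.sum_congr rfl fun b _ => hterm b]
    apply Finset.sum_nonneg
    intro b _
    have hq := hS.dotProduct_mulVec_nonneg (fun a => x (a, b))
    rw [star_trivial] at hq
    exact mul_nonneg (hd b) hq
section finaltheorem
open Matrix Kronecker

lemma kron_neg_right {l m n p : Type*} (A : Matrix l m ℝ) (B : Matrix n p ℝ) :
    A ⊗ₖ (-B) = -(A ⊗ₖ B) := by
  ext ⟨a, b⟩ ⟨c, e⟩
  simp [kroneckerMap_apply]

lemma kron_neg_left {l m n p : Type*} (A : Matrix l m ℝ) (B : Matrix n p ℝ) :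
    (-A) ⊗ₖ B = -(A ⊗ₖ B) := by
  ext ⟨a, b⟩ ⟨c, e⟩
  simp [kroneckerMap_apply]


/-- Corollary 3.1 (separable coefficients): if `d(x,y) = d̃(x)d̂(y)`, `e(x,y) = ẽ(x)ê(y)`
with `0 < d̃₋ ≤ d̃ ≤ d̃₊`, `0 < ê₋ ≤ ê ≤ ê₊` and `d̂ ≥ 0`, `ẽ ≥ 0`, then
`X = Ê⁻¹ ⊗ D̃⁻¹` is symmetric positive definite and the symmetric part of `X·A` is
negative semidefinite. -/
theorem separable_coefficients_mem (α β : ℝ)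
    (hα : α ∈ Set.Ioo (1 : ℝ) 2) (hβ : β ∈ Set.Ioo (1 : ℝ) 2)
    (M₁ M₂ : ℕ) (hM₁ : 0 < M₁) (hM₂ : 0 < M₂)
    (xL xR yL yR : ℝ) (hx : xL < xR) (hy : yL < yR)
    (h₁ h₂ : ℝ) (hh₁ : h₁ = (xR - xL) / (M₁ + 1)) (hh₂ : h₂ = (yR - yL) / (M₂ + 1))
    (dt dh et eh : ℝ → ℝ)
    (dtm dtp ehm ehp : ℝ) (hdtm : 0 < dtm) (hehm : 0 < ehm)
    (hdt : ∀ x ∈ Set.Ioo xL xR, dtm ≤ dt x ∧ dt x ≤ dtp)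
    (heh : ∀ y ∈ Set.Ioo yL yR, ehm ≤ eh y ∧ eh y ≤ ehp)
    (hdh : ∀ y ∈ Set.Ioo yL yR, 0 ≤ dh y)
    (het : ∀ x ∈ Set.Ioo xL xR, 0 ≤ et x)
    (Dt Et : Matrix (Fin M₁) (Fin M₁) ℝ) (Dh Eh : Matrix (Fin M₂) (Fin M₂) ℝ)
    (hDt : Dt = Matrix.diagonal fun i : Fin M₁ => dt (xL + ((i : ℕ) + 1) * h₁))
    (hEt : Et = Matrix.diagonal fun i : Fin M₁ => et (xL + ((i : ℕ) + 1) * h₁))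
    (hDh : Dh = Matrix.diagonal fun j : Fin M₂ => dh (yL + ((j : ℕ) + 1) * h₂))
    (hEh : Eh = Matrix.diagonal fun j : Fin M₂ => eh (yL + ((j : ℕ) + 1) * h₂))
    (A : Matrix (Fin M₂ × Fin M₁) (Fin M₂ × Fin M₁) ℝ)
    (hA : A = (1 / (2 * h₁ ^ α)) •
                ((Dh ⊗ₖ Dt) * ((1 : Matrix (Fin M₂) (Fin M₂) ℝ) ⊗ₖ Gmat α M₁)) +
              (1 / (2 * h₂ ^ β)) •
                ((Eh ⊗ₖ Et) * (Gmat β M₂ ⊗ₖ (1 : Matrix (Fin M₁) (Fin M₁) ℝ)))) :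
    (Eh⁻¹ ⊗ₖ Dt⁻¹).PosDef ∧
    (-(((1 : ℝ) / 2) • ((Eh⁻¹ ⊗ₖ Dt⁻¹) * A + ((Eh⁻¹ ⊗ₖ Dt⁻¹) * A)ᵀ))).PosSemidef := by
  obtain ⟨hα1, hα2⟩ := hα
  obtain ⟨hβ1, hβ2⟩ := hβ
  -- grid geometry
  have h₁pos : 0 < h₁ := by
    rw [hh₁]; apply div_pos (by linarith) (by positivity)
  have h₂pos : 0 < h₂ := by
    rw [hh₂]; apply div_pos (by linarith) (by positivity)
  have hxval : ((M₁ : ℝ) + 1) * h₁ = xR - xL := by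
    rw [hh₁]; field_simp
  have hyval : ((M₂ : ℝ) + 1) * h₂ = yR - yL := by
    rw [hh₂]; field_simp
  have hxmem : ∀ i : Fin M₁, xL + ((i : ℕ) + 1) * h₁ ∈ Set.Ioo xL xR := by
    intro i
    constructor
    · have : 0 < ((i : ℕ) + 1 : ℝ) * h₁ := by positivity
      linarith
    · have hiM : ((i : ℕ) + 1 : ℝ) ≤ (M₁ : ℝ) := by
        have := i.isLt
        exact_mod_cast this
      have : ((i : ℕ) + 1 : ℝ) * h₁ < ((M₁ : ℝ) + 1) * h₁ :=
        mul_lt_mul_of_pos_right (by linarith) h₁pos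
      linarith [hxval]
  have hymem : ∀ j : Fin M₂, yL + ((j : ℕ) + 1) * h₂ ∈ Set.Ioo yL yR := by
    intro j
    constructor
    · have : 0 < ((j : ℕ) + 1 : ℝ) * h₂ := by positivity
      linarith
    · have hjM : ((j : ℕ) + 1 : ℝ) ≤ (M₂ : ℝ) := by
        have := j.isLt
        exact_mod_cast this
      have : ((j : ℕ) + 1 : ℝ) * h₂ < ((M₂ : ℝ) + 1) * h₂ :=
        mul_lt_mul_of_pos_right (by linarith) h₂pos
      linarith [hyval]
  have hdtpos : ∀ i : Fin M₁, 0 < dt (xL + ((i : ℕ) + 1) * h₁) :=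
    fun i => lt_of_lt_of_le hdtm (hdt _ (hxmem i)).1
  have hehpos : ∀ j : Fin M₂, 0 < eh (yL + ((j : ℕ) + 1) * h₂) :=
    fun j => lt_of_lt_of_le hehm (heh _ (hymem j)).1
  have hdhnn : ∀ j : Fin M₂, 0 ≤ dh (yL + ((j : ℕ) + 1) * h₂) :=
    fun j => hdh _ (hymem j)
  have hetnn : ∀ i : Fin M₁, 0 ≤ et (xL + ((i : ℕ) + 1) * h₁) :=
    fun i => het _ (hxmem i)
  -- inverses of the diagonal matrices
  have hEhinv : Eh⁻¹ = Matrix.diagonal (fun j : Fin M₂ =>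
      (eh (yL + ((j : ℕ) + 1) * h₂))⁻¹) := by
    apply Matrix.inv_eq_right_inv
    rw [hEh, Matrix.diagonal_mul_diagonal]
    have : (fun j : Fin M₂ => eh (yL + ((j : ℕ) + 1) * h₂) * (eh (yL + ((j : ℕ) + 1) * h₂))⁻¹)
        = fun _ : Fin M₂ => (1 : ℝ) := funext fun j => mul_inv_cancel₀ (ne_of_gt (hehpos j))
    rw [this, Matrix.diagonal_one]
  have hDtinv : Dt⁻¹ = Matrix.diagonal (fun i : Fin M₁ =>
      (dt (xL + ((i : ℕ) + 1) * h₁))⁻¹) := by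
    apply Matrix.inv_eq_right_inv
    rw [hDt, Matrix.diagonal_mul_diagonal]
    have : (fun i : Fin M₁ => dt (xL + ((i : ℕ) + 1) * h₁) * (dt (xL + ((i : ℕ) + 1) * h₁))⁻¹)
        = fun _ : Fin M₁ => (1 : ℝ) := funext fun i => mul_inv_cancel₀ (ne_of_gt (hdtpos i))
    rw [this, Matrix.diagonal_one]
  have hXdiag : Eh⁻¹ ⊗ₖ Dt⁻¹ = Matrix.diagonal (fun p : Fin M₂ × Fin M₁ =>
      (eh (yL + ((p.1 : ℕ) + 1) * h₂))⁻¹ * (dt (xL + ((p.2 : ℕ) + 1) * h₁))⁻¹) := by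
    rw [hEhinv, hDtinv, Matrix.diagonal_kronecker_diagonal]
  constructor
  · rw [hXdiag]
    refine Matrix.posDef_diagonal_iff.2 fun p => ?_
    exact mul_pos (inv_pos.2 (hehpos p.1)) (inv_pos.2 (hdtpos p.2))
  · -- the symmetric part
    have hDtdet : IsUnit Dt.det := by
      rw [hDt, Matrix.det_diagonal]
      exact isUnit_iff_ne_zero.2 (Finset.prod_ne_zero_iff.2 fun i _ =>
        ne_of_gt (hdtpos i))
    have hEhdet : IsUnit Eh.det := by
      rw [hEh, Matrix.det_diagonal]
      exact isUnit_iff_ne_zero.2 (Finset.prod_ne_zero_iff.2 fun j _ =>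
        ne_of_gt (hehpos j))
    have hDtinvDt : Dt⁻¹ * Dt = 1 := Matrix.nonsing_inv_mul _ hDtdet
    have hEhinvEh : Eh⁻¹ * Eh = 1 := Matrix.nonsing_inv_mul _ hEhdet
    set X := Eh⁻¹ ⊗ₖ Dt⁻¹ with hXdef
    set G₁ := Gmat α M₁ with hG₁def
    set G₂ := Gmat β M₂ with hG₂def
    set c₁ : ℝ := 1 / (2 * h₁ ^ α) with hc₁def
    set c₂ : ℝ := 1 / (2 * h₂ ^ β) with hc₂def
    have hc₁ : 0 ≤ c₁ := by
      rw [hc₁def]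
      have := Real.rpow_pos_of_pos h₁pos α
      positivity
    have hc₂ : 0 ≤ c₂ := by
      rw [hc₂def]
      have := Real.rpow_pos_of_pos h₂pos β
      positivity
    set P := Eh⁻¹ * Dh with hPdef
    set Q := Dt⁻¹ * Et with hQdef
    have hP : P = Matrix.diagonal (fun j : Fin M₂ =>
        (eh (yL + ((j : ℕ) + 1) * h₂))⁻¹ * dh (yL + ((j : ℕ) + 1) * h₂)) := by
      rw [hPdef, hEhinv, hDh, Matrix.diagonal_mul_diagonal]
    have hQ : Q = Matrix.diagonal (fun i : Fin M₁ =>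
        (dt (xL + ((i : ℕ) + 1) * h₁))⁻¹ * et (xL + ((i : ℕ) + 1) * h₁)) := by
      rw [hQdef, hDtinv, hEt, Matrix.diagonal_mul_diagonal]
    have hXA : X * A = c₁ • (P ⊗ₖ G₁) + c₂ • (G₂ ⊗ₖ Q) := by
      rw [hA, Matrix.mul_add, mul_smul_comm, mul_smul_comm]
      congr 1
      · congr 1
        rw [← Matrix.mul_assoc, hXdef, ← Matrix.mul_kronecker_mul, hDtinvDt,
          ← Matrix.mul_kronecker_mul, Matrix.mul_one, Matrix.one_mul]
      · congr 1
        rw [← Matrix.mul_assoc, hXdef, ← Matrix.mul_kronecker_mul, hEhinvEh,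
          ← Matrix.mul_kronecker_mul, Matrix.one_mul, Matrix.mul_one]
    have hPsym : Pᵀ = P := by rw [hP]; exact Matrix.diagonal_transpose _
    have hQsym : Qᵀ = Q := by rw [hQ]; exact Matrix.diagonal_transpose _
    have hXAT : (X * A)ᵀ = c₁ • (P ⊗ₖ G₁ᵀ) + c₂ • (G₂ᵀ ⊗ₖ Q) := by
      rw [hXA, Matrix.transpose_add, Matrix.transpose_smul, Matrix.transpose_smul,
        kron_transpose, kron_transpose, hPsym, hQsym]
    have key : -(((1 : ℝ) / 2) • (X * A + (X * A)ᵀ))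
        = (c₁ * (1 / 2)) • (P ⊗ₖ (-(G₁ + G₁ᵀ)))
          + (c₂ * (1 / 2)) • ((-(G₂ + G₂ᵀ)) ⊗ₖ Q) := by
      rw [hXAT, hXA, kron_neg_right, kron_neg_left, Matrix.kronecker_add,
        Matrix.add_kronecker]
      module
    rw [key]
    have hN₁ : (-(G₁ + G₁ᵀ)).PosSemidef := negSymGmat_posSemidef hα1 hα2 M₁
    have hN₂ : (-(G₂ + G₂ᵀ)).PosSemidef := negSymGmat_posSemidef hβ1 hβ2 M₂
    apply Matrix.PosSemidef.add
    · apply posSemidef_smul_real _ (by positivity)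
      rw [hP]
      exact posSemidef_diag_kron _ (fun j => mul_nonneg (inv_nonneg.2
        (le_of_lt (hehpos j))) (hdhnn j)) _ hN₁
    · apply posSemidef_smul_real _ (by positivity)
      rw [hQ]
      exact posSemidef_kron_diag _ (fun i => mul_nonneg (inv_nonneg.2
        (le_of_lt (hdtpos i))) (hetnn i)) _ hN₂
end finaltheorem
end
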